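/- If φ is a context formula for c with respect to 𝕊, then for every t ≥ 1 the probability of c at time t with respect to K = ((μ, T), 𝕊) satisfies P_K(c[t]) = Σ over worlds W satisfying φ of μ_t(W). -/

import Mathlib

open scoped ENNReal

namespace BL

variable {I A C V : Type*}

/-- A world `W` satisfies the context `κ` if it agrees with `κ` wherever it is defined. -/
def SatCtx (W : V → Bool) (κ : V → Option Bool) : Prop :=
  ∀ v b, κ v = some b → W v = b

/-- The ontology induced by the world `W` from the `V`-ontology `𝕊`. -/
def OW (𝕊 : Finset (A × (V → Option Bool))) (W : V → Bool) : Set A :=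
  {α | ∃ κ, (α, κ) ∈ 𝕊 ∧ SatCtx W κ}

/-- `i` is a model of the ontology `O`. -/
def IsOntModel (satA : I → A → Prop) (O : Set A) (i : I) : Prop :=
  ∀ α ∈ O, satA i α

/-- The ontology `O` entails the consequence `c`. -/
def Entails (satA : I → A → Prop) (satC : I → C → Prop) (O : Set A) (c : C) : Prop :=
  ∀ i : I, IsOntModel satA O i → satC i c

/-- A probabilistic interpretation `p` (a finitely supported PMF on pairs of an
interpretation and a world) is a model of the knowledge base `(PB, 𝕊)`. -/
def IsKBModel (satA : I → A → Prop) (PB : PMF (V → Bool))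
    (𝕊 : Finset (A × (V → Option Bool))) (p : PMF (I × (V → Bool))) : Prop :=
  p.support.Finite ∧
    (∀ iW ∈ p.support, IsOntModel satA (OW 𝕊 iW.2) iW.1) ∧
    ∀ W : V → Bool, ∑' i : I, p (i, W) = PB W

/-- `P_p(c)`: the probability of the consequence `c` w.r.t. `p`. -/
noncomputable def Pp (satC : I → C → Prop) (p : PMF (I × (V → Bool))) (c : C) : ℝ≥0∞ :=
  ∑' iW : I × (V → Bool), {x : I × (V → Bool) | satC x.1 c}.indicator (⇑p) iW

/-- `P_K(c)`: the infimum of `P_p(c)` over all models `p` of the knowledge base. -/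
noncomputable def PK (satA : I → A → Prop) (satC : I → C → Prop) (PB : PMF (V → Bool))
    (𝕊 : Finset (A × (V → Option Bool))) (c : C) : ℝ≥0∞ :=
  sInf {x : ℝ≥0∞ | ∃ p : PMF (I × (V → Bool)), IsKBModel satA PB 𝕊 p ∧ x = Pp satC p c}

/-- The `t`-th marginal of the DBN `(μ, T)` (0-indexed: `marg μ T 0 = μ_1 = μ`,
and `marg μ T n = μ_{n+1}` with `μ_{t+1}(W') = Σ_W μ_t(W)·T(W)(W')`). -/
noncomputable def marg (μ : PMF (V → Bool)) (T : (V → Bool) → PMF (V → Bool)) :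
    ℕ → PMF (V → Bool)
  | 0 => μ
  | n + 1 => (marg μ T n).bind T

/-- A timed probabilistic interpretation `(p_t)_{t ≥ 1}` is a model of the dynamic
knowledge base `((μ, T), 𝕊)` if for every `t ≥ 1`, `p t` is a model of `(μ_t, 𝕊)`. -/
def IsTimedModel (satA : I → A → Prop) (μ : PMF (V → Bool))
    (T : (V → Bool) → PMF (V → Bool)) (𝕊 : Finset (A × (V → Option Bool)))
    (p : ℕ → PMF (I × (V → Bool))) : Prop :=
  ∀ t : ℕ, 1 ≤ t → IsKBModel satA (marg μ T (t - 1)) 𝕊 (p t)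

/-- `P_K(c[t])`: the infimum of `P_{p_t}(c)` over all timed models of the dynamic KB. -/
noncomputable def PKtime (satA : I → A → Prop) (satC : I → C → Prop)
    (μ : PMF (V → Bool)) (T : (V → Bool) → PMF (V → Bool))
    (𝕊 : Finset (A × (V → Option Bool))) (c : C) (t : ℕ) : ℝ≥0∞ :=
  sInf {x : ℝ≥0∞ | ∃ p : ℕ → PMF (I × (V → Bool)),
    IsTimedModel satA μ T 𝕊 p ∧ x = Pp satC (p t) c}

/-- Auxiliary: the PMF on pairs obtained by pairing each world with a chosen
interpretation. -/
noncomputable def qmap (g : (V → Bool) → I) (ν : PMF (V → Bool)) : PMF (I × (V → Bool)) :=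
  ν.map (fun W => (g W, W))

lemma tsum_prod_swap {α β : Type*} (f : α × β → ℝ≥0∞) :
    ∑' x : α × β, f x = ∑' b : β, ∑' a : α, f (a, b) := by
  have h1 : ∑' x : α × β, f x = ∑' a : α, ∑' b : β, f (a, b) := ENNReal.tsum_prod (f := fun a b => f (a, b))
  rw [h1, ENNReal.tsum_comm]

open Classical in
lemma qmap_apply (g : (V → Bool) → I) (ν : PMF (V → Bool)) (i : I) (W : V → Bool) :
    qmap g ν (i, W) = if i = g W then ν W else 0 := by
  classical
  rw [qmap, PMF.map_apply]
  rw [tsum_eq_single W]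
  · by_cases h : i = g W
    · simp [h]
    · simp [h, Prod.ext_iff]
  · intro W' hW'
    simp only [Prod.mk.injEq, ite_eq_right_iff, and_imp]
    intro _ h
    exact absurd h.symm hW'

open Classical in
lemma qmap_marginal (g : (V → Bool) → I) (ν : PMF (V → Bool)) (W : V → Bool) :
    ∑' i : I, qmap g ν (i, W) = ν W := by
  classical
  rw [tsum_eq_single (g W)]
  · simp [qmap_apply]
  · intro i hi
    simp [qmap_apply, hi]

lemma qmap_support (g : (V → Bool) → I) (ν : PMF (V → Bool)) :
    (qmap g ν).support = (fun W => (g W, W)) '' ν.support := by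
  rw [qmap, PMF.support_map]

lemma Pp_qmap (satC : I → C → Prop) (g : (V → Bool) → I) (ν : PMF (V → Bool)) (c : C) :
    Pp satC (qmap g ν) c = ∑' W : V → Bool, {W : V → Bool | satC (g W) c}.indicator (⇑ν) W := by
  classical
  rw [Pp, tsum_prod_swap]
  refine tsum_congr fun W => ?_
  rw [tsum_eq_single (g W)]
  · by_cases h : satC (g W) c
    · rw [Set.indicator_of_mem (by exact h), Set.indicator_of_mem (by exact h)]
      simp [qmap_apply]
    · rw [Set.indicator_of_notMem (by exact h), Set.indicator_of_notMem (by exact h)]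
  · intro i hi
    rw [Set.indicator_apply]
    split
    · simp [qmap_apply, hi]
    · rfl

lemma Pp_ge_of_model (satA : I → A → Prop) (satC : I → C → Prop)
    (ν : PMF (V → Bool)) (𝕊 : Finset (A × (V → Option Bool))) (c : C)
    (φ : (V → Bool) → Prop)
    (hφ : ∀ W : V → Bool, Entails satA satC (OW 𝕊 W) c ↔ φ W)
    (p : PMF (I × (V → Bool))) (hp : IsKBModel satA ν 𝕊 p) :
    (∑' W : V → Bool, {W : V → Bool | φ W}.indicator (⇑ν) W) ≤ Pp satC p c := by
  classical
  rw [Pp, tsum_prod_swap]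
  refine ENNReal.tsum_le_tsum fun W => ?_
  by_cases h : φ W
  · rw [Set.indicator_of_mem (by exact h)]
    rw [← hp.2.2 W]
    refine ENNReal.tsum_le_tsum fun i => ?_
    by_cases hz : p (i, W) = 0
    · simp [hz]
    · have hsupp : (i, W) ∈ p.support := by
        rw [PMF.mem_support_iff]; exact hz
      have hmodel := hp.2.1 _ hsupp
      have hsat : satC i c := (hφ W).mpr h i hmodel
      rw [Set.indicator_of_mem (by exact hsat)]
  · rw [Set.indicator_of_notMem (by exact h)]
    exact zero_le

/-- if `φ` is a context formula for `c` w.r.t. `𝕊`, then for every `t ≥ 1`,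
`P_K(c[t]) = Σ_{W ⊨ φ} μ_t(W)`. -/
theorem timed_entailment_context_formula [Fintype V]
    (satA : I → A → Prop) (satC : I → C → Prop)
    (μ : PMF (V → Bool)) (T : (V → Bool) → PMF (V → Bool))
    (𝕊 : Finset (A × (V → Option Bool))) (c : C)
    (φ : (V → Bool) → Prop)
    (hφ : ∀ W : V → Bool, Entails satA satC (OW 𝕊 W) c ↔ φ W)
    (t : ℕ) (ht : 1 ≤ t)
    (hmod : ∀ W : V → Bool, ∃ i : I, IsOntModel satA (OW 𝕊 W) i) :
    PKtime satA satC μ T 𝕊 c t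
      = ∑' W : V → Bool, {W : V → Bool | φ W}.indicator (⇑(marg μ T (t - 1))) W := by
  classical
  -- choose, for each world, a model of `O_W` witnessing `satC _ c ↔ φ W`
  have hg : ∀ W : V → Bool, ∃ i : I, IsOntModel satA (OW 𝕊 W) i ∧ (satC i c ↔ φ W) := by
    intro W
    by_cases h : φ W
    · obtain ⟨i, hi⟩ := hmod W
      exact ⟨i, hi, by simp [h, (hφ W).mpr h i hi]⟩
    · have : ¬ Entails satA satC (OW 𝕊 W) c := fun he => h ((hφ W).mp he)
      rw [Entails] at this
      push_neg at this
      obtain ⟨i, hi, hnc⟩ := this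
      exact ⟨i, hi, by simp [h, hnc]⟩
  choose g hg1 hg2 using hg
  set p : ℕ → PMF (I × (V → Bool)) := fun s => qmap g (marg μ T (s - 1)) with hp
  have htimed : IsTimedModel satA μ T 𝕊 p := by
    intro s _
    refine ⟨?_, ?_, ?_⟩
    · rw [hp, qmap_support]
      exact (Set.toFinite _).image _
    · intro iW hiW
      rw [hp, qmap_support] at hiW
      obtain ⟨W, _, rfl⟩ := hiW
      exact hg1 W
    · intro W
      exact qmap_marginal g _ W
  have hval : Pp satC (p t) c
      = ∑' W : V → Bool, {W : V → Bool | φ W}.indicator (⇑(marg μ T (t - 1))) W := by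
    rw [hp, Pp_qmap]
    have hset : {W : V → Bool | satC (g W) c} = {W : V → Bool | φ W} :=
      Set.ext fun W => hg2 W
    rw [hset]
  refine le_antisymm ?_ ?_
  · exact sInf_le ⟨p, htimed, hval.symm⟩
  · refine le_sInf fun x hx => ?_
    obtain ⟨q, hq, rfl⟩ := hx
    exact Pp_ge_of_model satA satC _ 𝕊 c φ hφ (q t) (hq t ht)

end BL
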